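/- Let B, D ∈ (0,∞) and γ ∈ (1,2), and define f(t) = ∫_{[−π,π]²} exp( −t [ B(φ₁² + φ₂²) + D |φ₁ + φ₂|^γ ] ) dφ₁ dφ₂ for t > 0. Then f(t) ≍ t^{−(1/γ + 1/2)} as t → ∞, i.e., there exist constants 0 < c₁ ≤ c₂ < ∞ and t₀ ≥ 1 such that c₁ t^{−(1/γ+1/2)} ≤ f(t) ≤ c₂ t^{−(1/γ+1/2)} for all t ≥ t₀. In particular, ∫_1^∞ f(t) dt < ∞. -/

import Mathlib

open Filter MeasureTheory Real

lemma aux_integrable_exp_neg_mul_abs_rpow {b γ : ℝ} (hb : 0 < b) (hγ : 1 ≤ γ) :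
    Integrable (fun x : ℝ => Real.exp (-b * |x| ^ γ)) := by
  have hf : IntegrableOn (fun x : ℝ => Real.exp (-b * x ^ γ)) (Set.Ioi 0) := by
    have h := integrableOn_rpow_mul_exp_neg_mul_rpow (p := γ) (s := 0) (b := b)
      (by norm_num) (by linarith) hb
    refine h.congr_fun (fun x hx => ?_) measurableSet_Ioi
    dsimp only
    rw [Real.rpow_zero, one_mul]
  have hf' : IntegrableOn (fun x : ℝ => Real.exp (-b * |x| ^ γ)) (Set.Ioi 0) := by
    refine hf.congr_fun (fun x hx => ?_) measurableSet_Ioi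
    rw [abs_of_pos (Set.mem_Ioi.mp hx)]
  have int_Iic : IntegrableOn (fun x : ℝ => Real.exp (-b * |x| ^ γ)) (Set.Iic 0) := by
    rw [← Measure.map_neg_eq_self (volume : Measure ℝ)]
    have m : MeasurableEmbedding fun x : ℝ => -x := (Homeomorph.neg ℝ).measurableEmbedding
    rw [m.integrableOn_map_iff]
    simp_rw [Function.comp_def, abs_neg, Set.neg_preimage, Set.neg_Iic, neg_zero]
    exact Iff.mpr integrableOn_Ici_iff_integrableOn_Ioi hf'
  have h := int_Iic.union hf'
  rwa [Set.Iic_union_Ioi, integrableOn_univ] at h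

lemma aux_integral_exp_neg_mul_abs_rpow {b γ : ℝ} (hb : 0 < b) (hγ : 0 < γ) :
    ∫ x : ℝ, Real.exp (-b * |x| ^ γ) = 2 * (b ^ (-1 / γ) * Real.Gamma (1 / γ + 1)) := by
  rw [integral_comp_abs (f := fun x => Real.exp (-b * x ^ γ)),
    integral_exp_neg_mul_rpow hγ hb]

set_option maxHeartbeats 1000000 in
/-- Laplace asymptotics (eqs. (6.36)–(6.38)) for the counterexample with asymmetric
migration: for `B, D > 0` and `γ ∈ (1,2)`, the integral
`f(t) = ∫_{[-π,π]²} exp(-t[B(φ₁²+φ₂²) + D|φ₁+φ₂|^γ]) dφ` satisfies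
`f(t) ≍ t^{-(1/γ+1/2)}` as `t → ∞`; in particular `∫_1^∞ f(t) dt < ∞`. -/
theorem laplace_asymptotics_asymmetric_migration
    (B D γ : ℝ) (hB : 0 < B) (hD : 0 < D) (hγ : γ ∈ Set.Ioo (1 : ℝ) 2)
    (f : ℝ → ℝ)
    (hf : ∀ t : ℝ, f t =
      ∫ φ in (Set.Icc (-Real.pi) Real.pi ×ˢ Set.Icc (-Real.pi) Real.pi),
        Real.exp (-t * (B * (φ.1 ^ 2 + φ.2 ^ 2) + D * |φ.1 + φ.2| ^ γ))) :
    (∃ c₁ c₂ t₀ : ℝ, 0 < c₁ ∧ c₁ ≤ c₂ ∧ 1 ≤ t₀ ∧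
      ∀ t : ℝ, t₀ ≤ t →
        c₁ * t ^ (-(1 / γ + 1 / 2)) ≤ f t ∧ f t ≤ c₂ * t ^ (-(1 / γ + 1 / 2)))
    ∧ MeasureTheory.IntegrableOn f (Set.Ioi (1 : ℝ)) := by
  obtain ⟨hγ1, hγ2⟩ := hγ
  have hγ0 : 0 < γ := by linarith
  set S : Set (ℝ × ℝ) := Set.Icc (-Real.pi) Real.pi ×ˢ Set.Icc (-Real.pi) Real.pi with hS
  set F : ℝ → ℝ × ℝ → ℝ :=
    fun t z => Real.exp (-t * (B * (z.1 ^ 2 + z.2 ^ 2) + D * |z.1 + z.2| ^ γ)) with hFdef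
  have hfF : ∀ t, f t = ∫ z in S, F t z := hf
  -- continuity facts
  have habs : Continuous fun z : ℝ × ℝ => |z.1 + z.2| ^ γ :=
    Continuous.rpow_const (continuous_abs.comp (continuous_fst.add continuous_snd))
      (fun z => Or.inr hγ0.le)
  have hg : Continuous fun z : ℝ × ℝ => B * (z.1 ^ 2 + z.2 ^ 2) + D * |z.1 + z.2| ^ γ :=
    (continuous_const.mul ((continuous_fst.pow 2).add (continuous_snd.pow 2))).add
      (continuous_const.mul habs)
  have hFc : ∀ t, Continuous (F t) := fun t =>
    Real.continuous_exp.comp (continuous_const.mul hg)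
  have hScompact : IsCompact S := isCompact_Icc.prod isCompact_Icc
  have hSmeas : MeasurableSet S := measurableSet_Icc.prod measurableSet_Icc
  have hFint : ∀ t, IntegrableOn (F t) S :=
    fun t => (hFc t).continuousOn.integrableOn_compact hScompact
  have hFnn : ∀ t z, 0 ≤ F t z := fun t z => (Real.exp_pos _).le
  have hπ1 : (1 : ℝ) ≤ Real.pi := by linarith [Real.pi_gt_three]
  set Γ₀ := Real.Gamma (1 / γ + 1) with hΓ₀def
  have hΓ₀ : 0 < Γ₀ := Real.Gamma_pos_of_pos (by positivity)
  set C₂ : ℝ := Real.sqrt (Real.pi / B) * (2 * (D ^ (-1 / γ) * Γ₀)) with hC₂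
  -- upper bound
  have hupper : ∀ t : ℝ, 1 ≤ t → f t ≤ C₂ * t ^ (-(1 / γ + 1 / 2)) := by
    intro t ht
    have ht0 : 0 < t := lt_of_lt_of_le one_pos ht
    have hc0 : 0 < t * D := by positivity
    set h : ℝ × ℝ → ℝ :=
      fun z => Real.exp (-(t * B) * z.1 ^ 2) * Real.exp (-(t * D) * |z.1 + z.2| ^ γ) with hh
    have hint1 : Integrable (fun u : ℝ => Real.exp (-(t * D) * |u| ^ γ)) :=
      aux_integrable_exp_neg_mul_abs_rpow hc0 hγ1.le
    have hcont_h : Continuous h :=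
      (Real.continuous_exp.comp (continuous_const.mul ((continuous_fst.pow 2)))).mul
        (Real.continuous_exp.comp (continuous_const.mul habs))
    have hJ : ∀ x : ℝ, (∫ y : ℝ, Real.exp (-(t * B) * x ^ 2)
        * Real.exp (-(t * D) * |x + y| ^ γ))
        = Real.exp (-(t * B) * x ^ 2) * ∫ u : ℝ, Real.exp (-(t * D) * |u| ^ γ) := by
      intro x
      rw [MeasureTheory.integral_const_mul]
      congr 1
      exact integral_add_left_eq_self (μ := volume)
        (fun u : ℝ => Real.exp (-(t * D) * |u| ^ γ)) x
    have hint' : Integrable h ((volume : Measure ℝ).prod (volume : Measure ℝ)) := by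
      refine (integrable_prod_iff ?_).mpr ⟨?_, ?_⟩
      · rw [← Measure.volume_eq_prod]; exact hcont_h.aestronglyMeasurable
      · refine Filter.Eventually.of_forall fun x => ?_
        simp only [hh]
        exact (hint1.comp_add_left x).const_mul _
      · have he : (fun x : ℝ => ∫ y : ℝ, ‖h (x, y)‖)
            = fun x : ℝ => Real.exp (-(t * B) * x ^ 2)
              * ∫ u : ℝ, Real.exp (-(t * D) * |u| ^ γ) := by
          funext x
          rw [← hJ x]
          congr 1
          funext y
          simp [hh, norm_mul, abs_of_pos (Real.exp_pos _)]
        rw [he]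
        exact (integrable_exp_neg_mul_sq (by positivity)).mul_const _
    have hint : Integrable h := by rw [Measure.volume_eq_prod]; exact hint'
    have hval : ∫ z, h z = Real.sqrt (Real.pi / (t * B))
        * (2 * ((t * D) ^ (-1 / γ) * Γ₀)) := by
      rw [Measure.volume_eq_prod, MeasureTheory.integral_prod _ hint']
      simp only [hh]
      calc (∫ x : ℝ, ∫ y : ℝ, Real.exp (-(t * B) * x ^ 2)
            * Real.exp (-(t * D) * |x + y| ^ γ))
          = ∫ x : ℝ, Real.exp (-(t * B) * x ^ 2)
            * ∫ u : ℝ, Real.exp (-(t * D) * |u| ^ γ) := by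
            congr 1; funext x; exact hJ x
        _ = (∫ x : ℝ, Real.exp (-(t * B) * x ^ 2))
            * ∫ u : ℝ, Real.exp (-(t * D) * |u| ^ γ) := by
            rw [MeasureTheory.integral_mul_const]
        _ = Real.sqrt (Real.pi / (t * B)) * (2 * ((t * D) ^ (-1 / γ) * Γ₀)) := by
            rw [integral_gaussian, aux_integral_exp_neg_mul_abs_rpow hc0 hγ0]
    have hchain : f t ≤ ∫ z, h z := by
      rw [hfF t]
      calc ∫ z in S, F t z ≤ ∫ z in S, h z := by
            refine setIntegral_mono (hFint t) hint.integrableOn (fun z => ?_)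
            simp only [hFdef, hh, ← Real.exp_add]
            apply Real.exp_le_exp.mpr
            nlinarith [mul_nonneg (mul_nonneg ht0.le hB.le) (sq_nonneg z.2),
              mul_nonneg (mul_nonneg ht0.le hD.le)
                (Real.rpow_nonneg (abs_nonneg (z.1 + z.2)) γ)]
        _ ≤ ∫ z, h z := setIntegral_le_integral hint
            (Filter.Eventually.of_forall fun z => by positivity)
    have halg : Real.sqrt (Real.pi / (t * B)) * (2 * ((t * D) ^ (-1 / γ) * Γ₀))
        = C₂ * t ^ (-(1 / γ + 1 / 2)) := by
      have e1 : Real.sqrt (Real.pi / (t * B))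
          = Real.sqrt (Real.pi / B) * t ^ (-(1 / 2) : ℝ) := by
        rw [show Real.pi / (t * B) = (Real.pi / B) * t⁻¹ by
            rw [mul_comm t B, ← div_div, div_eq_mul_inv (Real.pi / B)],
          Real.sqrt_mul (by positivity), Real.sqrt_inv, Real.sqrt_eq_rpow,
          Real.sqrt_eq_rpow, ← Real.rpow_neg ht0.le]
      have e2 : (t * D) ^ (-1 / γ) = t ^ (-1 / γ) * D ^ (-1 / γ) :=
        Real.mul_rpow ht0.le hD.le
      have e3 : t ^ (-(1 / 2) : ℝ) * t ^ (-1 / γ) = t ^ (-(1 / γ + 1 / 2)) := by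
        rw [← Real.rpow_add ht0]; congr 1; ring
      rw [e1, e2, hC₂, ← e3]; ring
    calc f t ≤ ∫ z, h z := hchain
      _ = C₂ * t ^ (-(1 / γ + 1 / 2)) := by rw [hval, halg]
  -- lower bound
  set ε := Real.exp (-(5 * B + D)) with hεdef
  have hlower : ∀ t : ℝ, 1 ≤ t → ε * t ^ (-(1 / γ + 1 / 2)) ≤ f t := by
    intro t ht
    have ht0 : 0 < t := lt_of_lt_of_le one_pos ht
    set a := t ^ (-(1 / γ)) with ha
    set r := t ^ (-(1 / 2) : ℝ) with hr
    have ha0 : 0 < a := Real.rpow_pos_of_pos ht0 _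
    have hr0 : 0 < r := Real.rpow_pos_of_pos ht0 _
    have har : a ≤ r := by
      apply Real.rpow_le_rpow_of_exponent_le ht
      have : 1 / 2 ≤ 1 / γ := one_div_le_one_div_of_le hγ0 hγ2.le
      linarith
    have hr1 : r ≤ 1 := Real.rpow_le_one_of_one_le_of_nonpos ht (by norm_num)
    have ha1 : a ≤ 1 := le_trans har hr1
    have haγ : a ^ γ = t⁻¹ := by
      rw [ha, ← Real.rpow_mul ht0.le, show -(1 / γ) * γ = -1 by field_simp,
        Real.rpow_neg_one]
    have hr2 : r ^ 2 = t⁻¹ := by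
      rw [hr, ← Real.rpow_natCast (t ^ (-(1 / 2) : ℝ)) 2, ← Real.rpow_mul ht0.le,
        show -(1 / 2 : ℝ) * ((2 : ℕ) : ℝ) = -1 by norm_num, Real.rpow_neg_one]
    set R : Set (ℝ × ℝ) := {z | z.1 ∈ Set.Icc 0 r ∧ z.1 + z.2 ∈ Set.Icc 0 a} with hRdef
    have hRmeas : MeasurableSet R :=
      (measurable_fst measurableSet_Icc).inter
        ((measurable_fst.add measurable_snd) measurableSet_Icc)
    have hRsub : R ⊆ S := by
      rintro ⟨x, y⟩ ⟨⟨hx0, hxr⟩, hs0, hsa⟩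
      simp only [hS, Set.mem_prod, Set.mem_Icc]
      refine ⟨⟨by linarith, by linarith⟩, ⟨by linarith, by linarith⟩⟩
    have hslice : ∀ x : ℝ, Prod.mk x ⁻¹' R
        = if x ∈ Set.Icc 0 r then Set.Icc (-x) (a - x) else ∅ := by
      intro x
      by_cases hx : x ∈ Set.Icc (0 : ℝ) r
      · rw [if_pos hx]
        obtain ⟨hx0, hxr⟩ := Set.mem_Icc.mp hx
        ext y
        simp only [hRdef, Set.mem_preimage, Set.mem_setOf_eq, Set.mem_Icc]
        constructor
        · rintro ⟨-, h1, h2⟩; constructor <;> linarith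
        · rintro ⟨h1, h2⟩; exact ⟨⟨hx0, hxr⟩, by constructor <;> linarith⟩
      · rw [if_neg hx]
        ext y
        simp only [hRdef, Set.mem_preimage, Set.mem_setOf_eq,
          Set.mem_empty_iff_false, iff_false, not_and]
        intro h hh2; exact hx h
    have hRvol : volume R = ENNReal.ofReal a * ENNReal.ofReal r := by
      rw [Measure.volume_eq_prod, Measure.prod_apply hRmeas]
      calc (∫⁻ x : ℝ, volume (Prod.mk x ⁻¹' R))
          = ∫⁻ x : ℝ, (Set.Icc (0 : ℝ) r).indicator (fun _ => ENNReal.ofReal a) x := by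
            congr 1; funext x
            rw [hslice x]
            by_cases hx : x ∈ Set.Icc (0 : ℝ) r
            · rw [if_pos hx, Set.indicator_of_mem hx, Real.volume_Icc]
              congr 1; ring
            · rw [if_neg hx, Set.indicator_of_notMem hx, measure_empty]
        _ = ENNReal.ofReal a * ENNReal.ofReal r := by
            rw [lintegral_indicator measurableSet_Icc, setLIntegral_const,
              Real.volume_Icc, sub_zero]
    have hεle : ∀ z ∈ R, ε ≤ F t z := by
      rintro ⟨x, y⟩ ⟨⟨hx0, hxr⟩, hs0, hsa⟩
      have hx2 : x ^ 2 ≤ t⁻¹ := by rw [← hr2]; nlinarith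
      have hsγ : |x + y| ^ γ ≤ t⁻¹ := by
        rw [← haγ, abs_of_nonneg hs0]
        exact Real.rpow_le_rpow hs0 hsa hγ0.le
      have hy2 : y ^ 2 ≤ 4 * t⁻¹ := by
        have h1 : -r ≤ y := by linarith
        have h2 : y ≤ a := by linarith
        nlinarith [hr2, har, hr0.le]
      have hsnn : 0 ≤ |x + y| ^ γ := Real.rpow_nonneg (abs_nonneg _) γ
      have htt : t * t⁻¹ = 1 := mul_inv_cancel₀ ht0.ne'
      simp only [hFdef, hεdef]
      apply Real.exp_le_exp.mpr
      have k1 : B * (x ^ 2 + y ^ 2) + D * |x + y| ^ γ ≤ (5 * B + D) * t⁻¹ := by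
        nlinarith [mul_le_mul_of_nonneg_left hx2 hB.le,
          mul_le_mul_of_nonneg_left hy2 hB.le,
          mul_le_mul_of_nonneg_left hsγ hD.le]
      have k2 : t * (B * (x ^ 2 + y ^ 2) + D * |x + y| ^ γ) ≤ 5 * B + D := by
        calc t * (B * (x ^ 2 + y ^ 2) + D * |x + y| ^ γ)
            ≤ t * ((5 * B + D) * t⁻¹) := by
              exact mul_le_mul_of_nonneg_left k1 ht0.le
          _ = (5 * B + D) * (t * t⁻¹) := by ring
          _ = 5 * B + D := by rw [htt, mul_one]
      nlinarith [k2]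
    have hRfin : volume R < ⊤ := by
      rw [hRvol]; exact ENNReal.mul_lt_top ENNReal.ofReal_lt_top ENNReal.ofReal_lt_top
    have step2 : ε * (a * r) ≤ ∫ z in R, F t z := by
      have hconst : ∫ _ in R, ε ∂(volume : Measure (ℝ × ℝ)) = (a * r) * ε := by
        rw [setIntegral_const, measureReal_def, hRvol, smul_eq_mul]
        congr 1
        rw [← ENNReal.ofReal_mul ha0.le, ENNReal.toReal_ofReal (by positivity)]
      have := setIntegral_mono_on
        (integrableOn_const hRfin.ne)
        ((hFint t).mono_set hRsub) hRmeas hεle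
      rw [hconst] at this
      linarith [this]
    have step1 : ∫ z in R, F t z ≤ ∫ z in S, F t z :=
      setIntegral_mono_set (hFint t)
        (Filter.Eventually.of_forall fun z => hFnn t z)
        (HasSubset.Subset.eventuallyLE hRsub)
    have har' : a * r = t ^ (-(1 / γ + 1 / 2)) := by
      rw [ha, hr, ← Real.rpow_add ht0]; congr 1; ring
    rw [hfF t, ← har']
    calc ε * (a * r) ≤ ∫ z in R, F t z := step2
      _ ≤ ∫ z in S, F t z := step1
  -- assemble
  have hp1 : 1 < 1 / γ + 1 / 2 := by
    have : 1 / 2 < 1 / γ := by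
      rw [div_lt_div_iff₀ (by norm_num) hγ0]
      linarith
    linarith
  refine ⟨⟨ε, max C₂ ε, 1, Real.exp_pos _, le_max_right _ _, le_refl 1, fun t ht => ?_⟩, ?_⟩
  · have h1 := hlower t ht
    have h2 := hupper t ht
    have htp : (0 : ℝ) ≤ t ^ (-(1 / γ + 1 / 2)) := Real.rpow_nonneg (by linarith) _
    exact ⟨h1, h2.trans (mul_le_mul_of_nonneg_right (le_max_left _ _) htp)⟩
  · have hmeas : AEStronglyMeasurable f ((volume : Measure ℝ).restrict (Set.Ioi 1)) := by
      have hG : Continuous fun q : ℝ × (ℝ × ℝ) =>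
          Real.exp (-q.1 * (B * (q.2.1 ^ 2 + q.2.2 ^ 2) + D * |q.2.1 + q.2.2| ^ γ)) :=
        Real.continuous_exp.comp ((continuous_fst.neg).mul (hg.comp continuous_snd))
      have hsm : StronglyMeasurable f := by
        have hs := (hG.stronglyMeasurable).integral_prod_right'
          (ν := (volume : Measure (ℝ × ℝ)).restrict S)
        have hfeq : f = fun t => ∫ z, Real.exp
            (-t * (B * (z.1 ^ 2 + z.2 ^ 2) + D * |z.1 + z.2| ^ γ))
            ∂((volume : Measure (ℝ × ℝ)).restrict S) := funext hf
        rw [hfeq]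
        exact hs
      exact hsm.aestronglyMeasurable.restrict
    refine Integrable.mono' (g := fun t : ℝ => (max C₂ ε) * t ^ (-(1 / γ + 1 / 2)))
      ?_ hmeas ?_
    · exact (integrableOn_Ioi_rpow_of_lt (by linarith) one_pos).const_mul _
    · filter_upwards [ae_restrict_mem measurableSet_Ioi] with t ht
      have ht1 : (1 : ℝ) ≤ t := le_of_lt ht
      have hfnn : 0 ≤ f t := by
        rw [hf t]
        exact setIntegral_nonneg hSmeas (fun z _ => (Real.exp_pos _).le)
      rw [Real.norm_eq_abs, abs_of_nonneg hfnn]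
      exact (hupper t ht1).trans (mul_le_mul_of_nonneg_right (le_max_left _ _)
        (Real.rpow_nonneg (by linarith) _))
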